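/- Let B, N > 0 and φ ∈ C([0,T]). With G, G*, H, H* the solution operators as defined, one has H*(φ) = G*(φ) + N⁻¹(B + N⁻¹) · G*(H(G*(φ))) on [0,T]. -/

import Mathlib

/-- `H*(φ) = G*(φ) + N⁻¹(B+N⁻¹)·G*(H(G*(φ)))` on `[0,T]`.
Here `Hs = H*(φ)` with auxiliary `C = G(H*(φ))`; `Gs = G*(φ)`; `HG = H(G*(φ))`
with auxiliary `A = G*(H(G*(φ)))`. -/
theorem stmt_8 (T B N : ℝ) (hT : 0 < T) (hB : 0 < B) (hN : 0 < N)
    (φ Hs Hs' C C' Gs Gs' HG HG' A A' : ℝ → ℝ)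
    (hφ : ContinuousOn φ (Set.Icc 0 T))
    -- Hs = H*(φ), C = G(Hs)
    (hHsd : ∀ t ∈ Set.Icc (0:ℝ) T, HasDerivWithinAt Hs (Hs' t) (Set.Icc 0 T) t)
    (hHsc : ContinuousOn Hs' (Set.Icc 0 T))
    (hCd : ∀ t ∈ Set.Icc (0:ℝ) T, HasDerivWithinAt C (C' t) (Set.Icc 0 T) t)
    (hCc : ContinuousOn C' (Set.Icc 0 T))
    (hCeq : ∀ t ∈ Set.Icc (0:ℝ) T, C' t + (B + N⁻¹) * C t = Hs t)
    (hC0 : C 0 = 0)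
    (hHseq : ∀ t ∈ Set.Icc (0:ℝ) T,
      -Hs' t + (B + N⁻¹) * Hs t - N⁻¹ * (B + N⁻¹) * C t = φ t)
    (hHsT : Hs T = 0)
    -- Gs = G*(φ)
    (hGsd : ∀ t ∈ Set.Icc (0:ℝ) T, HasDerivWithinAt Gs (Gs' t) (Set.Icc 0 T) t)
    (hGsc : ContinuousOn Gs' (Set.Icc 0 T))
    (hGseq : ∀ t ∈ Set.Icc (0:ℝ) T, -Gs' t + (B + N⁻¹) * Gs t = φ t)
    (hGsT : Gs T = 0)
    -- HG = H(Gs), A = G*(HG) = G*(H(G*(φ)))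
    (hHGd : ∀ t ∈ Set.Icc (0:ℝ) T, HasDerivWithinAt HG (HG' t) (Set.Icc 0 T) t)
    (hHGc : ContinuousOn HG' (Set.Icc 0 T))
    (hAd : ∀ t ∈ Set.Icc (0:ℝ) T, HasDerivWithinAt A (A' t) (Set.Icc 0 T) t)
    (hAc : ContinuousOn A' (Set.Icc 0 T))
    (hAeq : ∀ t ∈ Set.Icc (0:ℝ) T, -A' t + (B + N⁻¹) * A t = HG t)
    (hAT : A T = 0)
    (hHGeq : ∀ t ∈ Set.Icc (0:ℝ) T,
      HG' t + (B + N⁻¹) * HG t - N⁻¹ * (B + N⁻¹) * A t = Gs t)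
    (hHG0 : HG 0 = 0) :
    ∀ t ∈ Set.Icc (0:ℝ) T, Hs t = Gs t + N⁻¹ * (B + N⁻¹) * A t := by
  set k : ℝ := B + N⁻¹ with hk_def
  set c : ℝ := N⁻¹ * k with hc_def
  have hNinv : (0:ℝ) < N⁻¹ := inv_pos.mpr hN
  have hk : 0 < k := by positivity
  have hc : 0 < c := by positivity
  have hkc : c < k ^ 2 := by
    have : k ^ 2 - c = k * B := by rw [hc_def, hk_def]; ring
    nlinarith [mul_pos hk hB]
  set u : ℝ → ℝ := fun t => Hs t - Gs t - c * A t with hu_def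
  set u' : ℝ → ℝ := fun t => Hs' t - Gs' t - c * A' t with hu'_def
  set v : ℝ → ℝ := fun t => C t - HG t with hv_def
  set v' : ℝ → ℝ := fun t => C' t - HG' t with hv'_def
  have hud : ∀ t ∈ Set.Icc (0:ℝ) T, HasDerivWithinAt u (u' t) (Set.Icc 0 T) t :=
    fun t ht => ((hHsd t ht).sub (hGsd t ht)).sub ((hAd t ht).const_mul c)
  have hvd : ∀ t ∈ Set.Icc (0:ℝ) T, HasDerivWithinAt v (v' t) (Set.Icc 0 T) t :=
    fun t ht => (hCd t ht).sub (hHGd t ht)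
  have hueq : ∀ t ∈ Set.Icc (0:ℝ) T, u' t = k * u t - c * v t := by
    intro t ht
    have h1 := hHseq t ht
    have h2 := hGseq t ht
    have h3 := hAeq t ht
    simp only [hu'_def, hu_def, hv_def, hc_def]
    linear_combination h2 - h1 + N⁻¹ * k * h3
  have hveq : ∀ t ∈ Set.Icc (0:ℝ) T, v' t = u t - k * v t := by
    intro t ht
    have h1 := hCeq t ht
    have h2 := hHGeq t ht
    simp only [hv'_def, hu_def, hv_def, hc_def]
    linear_combination h1 - h2
  set F : ℝ → ℝ := fun t => u t ^ 2 - c * v t ^ 2 with hF_def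
  set F' : ℝ → ℝ := fun t => 2 * u t * u' t - c * (2 * v t * v' t) with hF'_def
  have hFd : ∀ t ∈ Set.Icc (0:ℝ) T, HasDerivWithinAt F (F' t) (Set.Icc 0 T) t := by
    intro t ht
    have h := ((hud t ht).pow 2).sub (((hvd t ht).pow 2).const_mul c)
    have e : (u ^ 2 - fun y => c * (v ^ 2) y) = F := by funext y; simp [hF_def]
    rw [e] at h
    refine h.congr_deriv ?_
    simp only [hF'_def]
    norm_num
  have hFcont : ContinuousOn F (Set.Icc 0 T) :=
    fun t ht => ((hFd t ht).continuousWithinAt)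
  have hFmono : MonotoneOn F (Set.Icc 0 T) := by
    apply monotoneOn_of_deriv_nonneg (convex_Icc 0 T) hFcont
    · intro x hx
      exact ((hFd x (interior_subset hx)).differentiableWithinAt).mono interior_subset
    · intro x hx
      rw [interior_Icc] at hx
      have hxI : x ∈ Set.Icc (0:ℝ) T := Set.Ioo_subset_Icc_self hx
      have hnhds : Set.Icc (0:ℝ) T ∈ nhds x := Icc_mem_nhds hx.1 hx.2
      have hD : HasDerivAt F (F' x) x := (hFd x hxI).hasDerivAt hnhds
      rw [hD.deriv]
      have h1 := hueq x hxI
      have h2 := hveq x hxI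
      simp only [hF'_def]
      rw [h1, h2]
      nlinarith [sq_nonneg (k * u x - c * v x), sq_nonneg (v x), sq_nonneg (u x),
        mul_pos hc (sub_pos.mpr hkc), sq_nonneg (u x - v x)]
  have h0T : (0:ℝ) ∈ Set.Icc (0:ℝ) T := Set.left_mem_Icc.mpr hT.le
  have hTT : T ∈ Set.Icc (0:ℝ) T := Set.right_mem_Icc.mpr hT.le
  have hv0 : v 0 = 0 := by simp [hv_def, hC0, hHG0]
  have huT : u T = 0 := by simp [hu_def, hHsT, hGsT, hAT]
  have hF0 : ∀ t ∈ Set.Icc (0:ℝ) T, F t = 0 := by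
    intro t ht
    have hle1 : F 0 ≤ F t := hFmono h0T ht ht.1
    have hle2 : F t ≤ F T := hFmono ht hTT ht.2
    have e0 : F 0 = u 0 ^ 2 := by simp [hF_def, hv0]
    have eT : F T = -(c * v T ^ 2) := by simp [hF_def, huT]
    linarith [sq_nonneg (u 0), mul_nonneg hc.le (sq_nonneg (v T))]
  have hu0 : ∀ t ∈ Set.Icc (0:ℝ) T, u t = 0 := by
    intro t ht
    have hud0 : UniqueDiffWithinAt ℝ (Set.Icc (0:ℝ) T) t :=
      (uniqueDiffOn_Icc hT) t ht
    have hFd0 : HasDerivWithinAt F 0 (Set.Icc 0 T) t := by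
      have hcst : HasDerivWithinAt (fun _ : ℝ => (0:ℝ)) 0 (Set.Icc 0 T) t :=
        hasDerivWithinAt_const t _ 0
      exact hcst.congr (fun y hy => hF0 y hy) (hF0 t ht)
    have hder : F' t = 0 := by
      rw [← (hFd t ht).derivWithin hud0, hFd0.derivWithin hud0]
    have hFt : u t ^ 2 - c * v t ^ 2 = 0 := hF0 t ht
    have h1 := hueq t ht
    have h2 := hveq t ht
    have hder' : 2 * u t * (k * u t - c * v t) - c * (2 * v t * (u t - k * v t)) = 0 := by
      rw [← h1, ← h2]; exact hder
    have e1 : k * u t ^ 2 - c * (u t * v t) = 0 := by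
      linear_combination hder' / 4 + (k / 2) * hFt
    have e2 : (k ^ 2 - c) * u t ^ 4 = 0 := by
      linear_combination (k * u t ^ 2 + c * (u t * v t)) * e1 - c * u t ^ 2 * hFt
    have hne : k ^ 2 - c ≠ 0 := ne_of_gt (sub_pos.mpr hkc)
    have h4 : u t ^ 4 = 0 := by
      rcases mul_eq_zero.mp e2 with h | h
      · exact absurd h hne
      · exact h
    exact pow_eq_zero_iff (by norm_num) |>.mp h4
  intro t ht
  have := hu0 t ht
  simp only [hu_def] at this
  linarith
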